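/- For every unit vector e ∈ ℝ⁶, the matrix A = −J₀ + 2((J₀e)eᵀ − e(J₀e)ᵀ) (the 2-form −ω₀ + 2 e∧J₀e) lies in the SO(6)-conjugation orbit of J₀, its moment map image is μ(A) = (−1+2(e₁²+e₂²), −1+2(e₃²+e₄²), −1+2(e₅²+e₆²)), and in particular the coordinates of μ(A) satisfy x + y + z = −1, so μ(A) lies on a face of the tetrahedron μ(SO(6)·J₀). -/

import Mathlib

open Matrix

noncomputable section

/-- The skew-symmetric matrix of the 2-form `eⁱ ∧ eʲ`. -/
def E (i j : Fin 6) : Matrix (Fin 6) (Fin 6) ℝ := fun k l =>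
  (if k = j ∧ l = i then (1 : ℝ) else 0) - (if k = i ∧ l = j then (1 : ℝ) else 0)

/-- The standard orthogonal complex structure `J₀ = E₁₂ + E₃₄ + E₅₆`. -/
def J₀ : Matrix (Fin 6) (Fin 6) ℝ := E 0 1 + E 2 3 + E 4 5

/-- The toric moment map `μ(A) = (⟨Ae₁,e₂⟩, ⟨Ae₃,e₄⟩, ⟨Ae₅,e₆⟩)`. -/
def μ (A : Matrix (Fin 6) (Fin 6) ℝ) : ℝ × ℝ × ℝ := (A 1 0, A 3 2, A 5 4)

def Qm : Matrix (Fin 6) (Fin 6) ℝ := diagonal (fun i => (-1 : ℝ) ^ (i : ℕ))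

lemma hMJ (e : Fin 6 → ℝ) :
    vecMulVec e e * J₀ = -vecMulVec e (J₀ *ᵥ e) := by
  ext i j
  fin_cases j <;>
    simp [mul_apply, vecMulVec_apply, mulVec, dotProduct, Fin.sum_univ_six, J₀, E,
      Matrix.add_apply, Matrix.neg_apply]

lemma hJM (e : Fin 6 → ℝ) :
    J₀ * vecMulVec e e = vecMulVec (J₀ *ᵥ e) e := by
  ext i j
  fin_cases i <;>
    simp [mul_apply, vecMulVec_apply, mulVec, dotProduct, Fin.sum_univ_six, J₀, E,
      Matrix.add_apply]

lemma hEVM (e : Fin 6 → ℝ) :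
    vecMulVec e (J₀ *ᵥ e) * vecMulVec e e = 0 := by
  ext i j
  simp [mul_apply, vecMulVec_apply, mulVec, dotProduct, Fin.sum_univ_six, J₀, E,
    Matrix.zero_apply]
  ring

lemma hMM (e : Fin 6 → ℝ) (he : e ⬝ᵥ e = 1) :
    vecMulVec e e * vecMulVec e e = vecMulVec e e := by
  have he' : e 0 * e 0 + e 1 * e 1 + e 2 * e 2 + e 3 * e 3 + e 4 * e 4 + e 5 * e 5 = 1 := by
    simpa [dotProduct, Fin.sum_univ_six] using he
  ext i j
  simp [mul_apply, vecMulVec_apply, Fin.sum_univ_six]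
  linear_combination (e i * e j) * he'

lemma hQQ : Qm * Qmᵀ = 1 := by
  ext i j
  fin_cases i <;> fin_cases j <;>
    simp [Qm, mul_apply, Fin.sum_univ_six, diagonal, Matrix.one_apply, transpose_apply] <;>
    norm_num [show ((0:Fin 6):ℕ) = 0 from rfl, show ((1:Fin 6):ℕ) = 1 from rfl, show ((2:Fin 6):ℕ) = 2 from rfl, show ((3:Fin 6):ℕ) = 3 from rfl, show ((4:Fin 6):ℕ) = 4 from rfl, show ((5:Fin 6):ℕ) = 5 from rfl]

lemma hQJQ : Qm * J₀ * Qmᵀ = -J₀ := by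
  ext i j
  fin_cases i <;> fin_cases j <;>
    simp [Qm, mul_apply, Fin.sum_univ_six, diagonal, J₀, E, Matrix.add_apply,
      Matrix.neg_apply, transpose_apply] <;> norm_num [show ((0:Fin 6):ℕ) = 0 from rfl, show ((1:Fin 6):ℕ) = 1 from rfl, show ((2:Fin 6):ℕ) = 2 from rfl, show ((3:Fin 6):ℕ) = 3 from rfl, show ((4:Fin 6):ℕ) = 4 from rfl, show ((5:Fin 6):ℕ) = 5 from rfl]

lemma hdetQ : Qm.det = -1 := by
  simp [Qm, det_diagonal, Fin.prod_univ_six]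
  norm_num [show ((0:Fin 6):ℕ) = 0 from rfl, show ((1:Fin 6):ℕ) = 1 from rfl, show ((2:Fin 6):ℕ) = 2 from rfl, show ((3:Fin 6):ℕ) = 3 from rfl, show ((4:Fin 6):ℕ) = 4 from rfl, show ((5:Fin 6):ℕ) = 5 from rfl]

lemma hRT (e : Fin 6 → ℝ) : ((2:ℝ) • vecMulVec e e - 1)ᵀ = (2:ℝ) • vecMulVec e e - 1 := by
  ext i j
  simp [transpose_apply, Matrix.sub_apply, Matrix.smul_apply, vecMulVec_apply,
    Matrix.one_apply, eq_comm]
  ring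

lemma hRR (e : Fin 6 → ℝ) (he : e ⬝ᵥ e = 1) :
    ((2:ℝ) • vecMulVec e e - 1) * ((2:ℝ) • vecMulVec e e - 1) = 1 := by
  simp only [sub_mul, mul_sub, smul_mul_assoc, mul_smul_comm, one_mul, mul_one,
    hMM e he, smul_smul]
  module

lemma hRJR (e : Fin 6 → ℝ) :
    ((2:ℝ) • vecMulVec e e - 1) * J₀ * ((2:ℝ) • vecMulVec e e - 1) =
      J₀ - (2:ℝ) • (vecMulVec (J₀ *ᵥ e) e - vecMulVec e (J₀ *ᵥ e)) := by
  simp only [sub_mul, mul_sub, smul_mul_assoc, mul_smul_comm, one_mul, mul_one, mul_assoc,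
    hJM e, hMJ e, neg_mul, hEVM e, smul_smul, smul_neg, smul_zero, neg_zero]
  module

lemma hdetR (e : Fin 6 → ℝ) (he : e ⬝ᵥ e = 1) :
    ((2:ℝ) • vecMulVec e e - 1).det = -1 := by
  have hR : (2:ℝ) • vecMulVec e e - 1 =
      -(1 + replicateCol Unit (fun i => (-2) * e i) * replicateRow Unit e) := by
    ext i j
    simp [Matrix.sub_apply, Matrix.smul_apply, vecMulVec_apply, Matrix.one_apply,
      Matrix.add_apply, Matrix.neg_apply, mul_apply, replicateCol_apply, replicateRow_apply]
    ring
  rw [hR, det_neg, det_one_add_replicateCol_mul_replicateRow]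
  have : e ⬝ᵥ (fun i => (-2) * e i) = -2 := by
    have := he
    simp only [dotProduct, Fin.sum_univ_six] at this ⊢
    linarith
  rw [this]
  norm_num

/-- For a unit vector `e`, the 2-form `−ω₀ + 2 e ∧ J₀e` lies in the `SO(6)`-orbit
of `J₀`, its moment image is `(−1+2(e₁²+e₂²), −1+2(e₃²+e₄²), −1+2(e₅²+e₆²))`,
whose coordinates sum to `−1`, a face of the moment tetrahedron. -/
theorem face_of_tetrahedron (e : Fin 6 → ℝ) (he : e ⬝ᵥ e = 1) :
    (∃ P : Matrix (Fin 6) (Fin 6) ℝ, P * Pᵀ = 1 ∧ P.det = 1 ∧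
        -J₀ + (2 : ℝ) • (vecMulVec (J₀ *ᵥ e) e - vecMulVec e (J₀ *ᵥ e)) = P * J₀ * Pᵀ) ∧
    μ (-J₀ + (2 : ℝ) • (vecMulVec (J₀ *ᵥ e) e - vecMulVec e (J₀ *ᵥ e))) =
      (-1 + 2 * (e 0 ^ 2 + e 1 ^ 2), -1 + 2 * (e 2 ^ 2 + e 3 ^ 2),
        -1 + 2 * (e 4 ^ 2 + e 5 ^ 2)) ∧
    (μ (-J₀ + (2 : ℝ) • (vecMulVec (J₀ *ᵥ e) e - vecMulVec e (J₀ *ᵥ e)))).1 +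
      (μ (-J₀ + (2 : ℝ) • (vecMulVec (J₀ *ᵥ e) e - vecMulVec e (J₀ *ᵥ e)))).2.1 +
      (μ (-J₀ + (2 : ℝ) • (vecMulVec (J₀ *ᵥ e) e - vecMulVec e (J₀ *ᵥ e)))).2.2 = -1 := by
  set R : Matrix (Fin 6) (Fin 6) ℝ := (2:ℝ) • vecMulVec e e - 1 with hRdef
  have he' : e 0 * e 0 + e 1 * e 1 + e 2 * e 2 + e 3 * e 3 + e 4 * e 4 + e 5 * e 5 = 1 := by
    simpa [dotProduct, Fin.sum_univ_six] using he
  refine ⟨⟨R * Qm, ?_, ?_, ?_⟩, ?_, ?_⟩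
  · rw [transpose_mul, mul_assoc, ← mul_assoc Qm, hQQ, one_mul, hRT e, hRR e he]
  · rw [det_mul, hdetR e he, hdetQ]; norm_num
  · symm
    calc R * Qm * J₀ * (R * Qm)ᵀ
        = R * (Qm * J₀ * Qmᵀ) * Rᵀ := by rw [transpose_mul]; simp only [mul_assoc]
      _ = R * (-J₀) * R := by rw [hQJQ, hRT e]
      _ = -(R * J₀ * R) := by simp only [mul_neg, neg_mul]
      _ = -J₀ + (2 : ℝ) • (vecMulVec (J₀ *ᵥ e) e - vecMulVec e (J₀ *ᵥ e)) := by
          rw [hRJR e]; abel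
  · refine Prod.ext ?_ (Prod.ext ?_ ?_) <;>
      simp [μ, Matrix.add_apply, Matrix.neg_apply, Matrix.smul_apply, Matrix.sub_apply,
        vecMulVec_apply, mulVec, dotProduct, Fin.sum_univ_six, J₀, E] <;> ring
  · simp [μ, Matrix.add_apply, Matrix.neg_apply, Matrix.smul_apply, Matrix.sub_apply,
      vecMulVec_apply, mulVec, dotProduct, Fin.sum_univ_six, J₀, E]
    linear_combination 2 * he'
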